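/- arXiv:2505.10606 — 2 statements merged into one kernel-verified Lean document; each statement's English description precedes it below -/
import Mathlib

section
/- Let L be a d-dimensional decoder-only attention layer with compact positional encoding and let K ⊆ ℝ^d be compact. Then for every ε > 0 there exists δ > 0 such that for every n ∈ ℕ and all sequences x, x̂ ∈ K^n: if sim(x, x̂) ≤ δ and ‖x_n − x̂_n‖_∞ ≤ δ, then ‖y_n − ŷ_n‖_∞ ≤ ε, where y_n and ŷ_n are the n-th output vectors of L on x and x̂ respectively. -/
open Finset Filter

open Classical in
/-- Relative Hamming distance between two finite sequences. -/
noncomputable def relHamming {A : Type*} {n : ℕ} (α β : Fin n → A) : ℝ :=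
  ((Finset.univ.filter (fun i => α i ≠ β i)).card : ℝ) / n

/-- Relative Hamming distance between two infinite sequences (1-indexed:
position `n ≥ 1` of the sequence `α : ℕ → A` is `α n`). -/
noncomputable def relHammingInf {A : Type*} (α β : ℕ → A) : ℝ :=
  Filter.liminf
    (fun n : ℕ => relHamming (fun i : Fin n => α (i.val + 1)) (fun i : Fin n => β (i.val + 1)))
    Filter.atTop

/-- A `d`-dimensional decoder-only attention layer. -/
structure AttentionLayer (d : ℕ) where
  p : ℕ → ℕ → (Fin d → ℝ)
  val : (Fin d → ℝ) → (Fin d → ℝ)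
  w : (Fin d → ℝ) → (Fin d → ℝ) → (Fin d → ℝ) → ℝ
  F : (Fin d → ℝ) → (Fin d → ℝ) → (Fin d → ℝ)
  w_pos : ∀ x y z, 0 < w x y z
  val_cont : Continuous val
  w_cont : Continuous fun t : (Fin d → ℝ) × (Fin d → ℝ) × (Fin d → ℝ) => w t.1 t.2.1 t.2.2
  F_cont : Continuous fun t : (Fin d → ℝ) × (Fin d → ℝ) => F t.1 t.2

/-- A positional encoding is compact if its range is contained in a compact set. -/
def AttentionLayer.CompactPE {d : ℕ} (L : AttentionLayer d) : Prop :=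
  ∃ K : Set (Fin d → ℝ), IsCompact K ∧ ∀ i j : ℕ, L.p i j ∈ K

/-- The `j`-th attention vector computed by the layer on input `x`. -/
noncomputable def AttentionLayer.attn {d : ℕ} (L : AttentionLayer d) {n : ℕ}
    (x : Fin n → (Fin d → ℝ)) (j : Fin n) : Fin d → ℝ :=
  (∑ i ∈ Finset.Iic j, L.w (x i) (x j) (L.p i.val j.val))⁻¹ •
    ∑ i ∈ Finset.Iic j, L.w (x i) (x j) (L.p i.val j.val) • L.val (x i)

/-- The output sequence of the layer on input `x`. -/
noncomputable def AttentionLayer.apply {d : ℕ} (L : AttentionLayer d) {n : ℕ}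
    (x : Fin n → (Fin d → ℝ)) : Fin n → (Fin d → ℝ) :=
  fun j => L.F (L.attn x j) (x j)

/-- `sim(x, x̂)`: the minimal `δ ≥ 0` such that `‖x_i − x̂_i‖ ≤ δ` for at least `(1−δ)n`
indices `i`. -/
noncomputable def simDist {d n : ℕ} (x y : Fin n → (Fin d → ℝ)) : ℝ :=
  sInf {δ : ℝ | 0 ≤ δ ∧
    (1 - δ) * n ≤ ((Finset.univ.filter (fun i => ‖x i - y i‖ ≤ δ)).card : ℝ)}

/-- Sequential application of a list of attention layers. -/
noncomputable def applyLayers {d : ℕ} (Ls : List (AttentionLayer d)) {n : ℕ}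
    (x : Fin n → (Fin d → ℝ)) : Fin n → (Fin d → ℝ) :=
  Ls.foldl (fun v L => L.apply v) x

/-- A decoder-only Transformer over a finite alphabet `A`. -/
structure Transformer (A : Type*) [Fintype A] (d : ℕ) where
  embed : A → ℕ → (Fin d → ℝ)
  layers : List (AttentionLayer d)
  proj : (Fin d → ℝ) → (A → ℝ)
  proj_cont : Continuous proj
  proj_nonneg : ∀ y a, 0 ≤ proj y a
  proj_sum : ∀ y, ∑ a, proj y a = 1

/-- The output probability distribution (as a vector in `ℝ^A`) of the Transformer on a
nonempty input sequence. -/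
noncomputable def Transformer.eval {A : Type*} [Fintype A] {d : ℕ} (T : Transformer A d)
    {n : ℕ} (α : Fin (n + 1) → A) : A → ℝ :=
  T.proj (applyLayers T.layers (fun j => T.embed (α j) j.val) (Fin.last n))

/-- A Transformer is compact if its input embedding has range in a compact set and all of
its layers have compact positional encoding. -/
def Transformer.IsCompactT {A : Type*} [Fintype A] {d : ℕ} (T : Transformer A d) : Prop :=
  (∃ K : Set (Fin d → ℝ), IsCompact K ∧ ∀ (a : A) (i : ℕ), T.embed a i ∈ K) ∧
  ∀ L ∈ T.layers, L.CompactPE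

/-- `T` eventually learns the infinite sequence `α` (1-indexed: position `n ≥ 1` is `α n`). -/
def EventuallyLearns {A : Type*} [Fintype A] {d : ℕ} (T : Transformer A d) (α : ℕ → A) :
    Prop :=
  ∃ ε : ℝ, 0 < ε ∧ ∃ n₀ : ℕ, ∀ n ≥ n₀, ∀ σ : A, σ ≠ α (n + 2) →
    T.eval (fun i : Fin (n + 1) => α (i.val + 1)) σ + ε ≤
      T.eval (fun i : Fin (n + 1) => α (i.val + 1)) (α (n + 2))

section helpers
variable {E : Type*} [NormedAddCommGroup E] [NormedSpace ℝ E] {ι : Type*}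

lemma avg_norm_le (s : Finset ι) (w : ι → ℝ) (v : ι → E) (V : ℝ)
    (hw : ∀ i ∈ s, 0 < w i) (hv : ∀ i ∈ s, ‖v i‖ ≤ V) (hs : s.Nonempty) :
    ‖(∑ i ∈ s, w i)⁻¹ • ∑ i ∈ s, w i • v i‖ ≤ V := by
  have hW : 0 < ∑ i ∈ s, w i := Finset.sum_pos hw hs
  have h1 : ‖∑ i ∈ s, w i • v i‖ ≤ (∑ i ∈ s, w i) * V := by
    rw [Finset.sum_mul]
    refine (norm_sum_le _ _).trans (Finset.sum_le_sum fun i hi => ?_)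
    rw [norm_smul, Real.norm_eq_abs, abs_of_pos (hw i hi)]
    exact mul_le_mul_of_nonneg_left (hv i hi) (hw i hi).le
  rw [norm_smul, Real.norm_eq_abs, abs_of_pos (inv_pos.mpr hW)]
  calc (∑ i ∈ s, w i)⁻¹ * ‖∑ i ∈ s, w i • v i‖
      ≤ (∑ i ∈ s, w i)⁻¹ * ((∑ i ∈ s, w i) * V) :=
        mul_le_mul_of_nonneg_left h1 (inv_nonneg.mpr hW.le)
    _ = V := by field_simp

lemma avg_diff_bound (s : Finset ι) (w w' : ι → ℝ) (v v' : ι → E) (V : ℝ)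
    (hw : ∀ i ∈ s, 0 < w i) (hw' : ∀ i ∈ s, 0 < w' i) (hs : s.Nonempty)
    (hv' : ∀ i ∈ s, ‖v' i‖ ≤ V) (hV : 0 ≤ V) :
    ‖(∑ i ∈ s, w i)⁻¹ • ∑ i ∈ s, w i • v i
      - (∑ i ∈ s, w' i)⁻¹ • ∑ i ∈ s, w' i • v' i‖
    ≤ (∑ i ∈ s, w i)⁻¹ * (∑ i ∈ s, w i * ‖v i - v' i‖)
      + 2 * V * (∑ i ∈ s, w i)⁻¹ * (∑ i ∈ s, |w i - w' i|) := by
  set W := ∑ i ∈ s, w i with hWdef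
  set W' := ∑ i ∈ s, w' i with hW'def
  have hW : 0 < W := Finset.sum_pos hw hs
  have hW' : 0 < W' := Finset.sum_pos hw' hs
  have e1 : W⁻¹ • ∑ i ∈ s, w i • v i = ∑ i ∈ s, (w i / W) • v i := by
    rw [Finset.smul_sum]
    exact Finset.sum_congr rfl fun i _ => by rw [smul_smul, ← div_eq_inv_mul]
  have e2 : W'⁻¹ • ∑ i ∈ s, w' i • v' i = ∑ i ∈ s, (w' i / W') • v' i := by
    rw [Finset.smul_sum]
    exact Finset.sum_congr rfl fun i _ => by rw [smul_smul, ← div_eq_inv_mul]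
  rw [e1, e2, ← Finset.sum_sub_distrib]
  have step : ∀ i ∈ s, ‖(w i / W) • v i - (w' i / W') • v' i‖
      ≤ (w i / W) * ‖v i - v' i‖ + |w i / W - w' i / W'| * V := by
    intro i hi
    have : (w i / W) • v i - (w' i / W') • v' i
        = (w i / W) • (v i - v' i) + (w i / W - w' i / W') • v' i := by
      rw [smul_sub, sub_smul]; abel
    rw [this]
    refine (norm_add_le _ _).trans (add_le_add ?_ ?_)
    · rw [norm_smul, Real.norm_eq_abs, abs_of_pos (div_pos (hw i hi) hW)]
    · rw [norm_smul, Real.norm_eq_abs]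
      exact mul_le_mul_of_nonneg_left (hv' i hi) (abs_nonneg _)
  refine (norm_sum_le _ _).trans ((Finset.sum_le_sum step).trans ?_)
  rw [Finset.sum_add_distrib]
  have t1 : ∑ i ∈ s, (w i / W) * ‖v i - v' i‖ = W⁻¹ * ∑ i ∈ s, w i * ‖v i - v' i‖ := by
    rw [Finset.mul_sum]
    exact Finset.sum_congr rfl fun i _ => by rw [div_mul_eq_mul_div, div_eq_inv_mul]
  have t2 : ∑ i ∈ s, |w i / W - w' i / W'| * V ≤ 2 * V * W⁻¹ * ∑ i ∈ s, |w i - w' i| := by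
    have key : ∀ i ∈ s, |w i / W - w' i / W'| ≤ |w i - w' i| / W + w' i * |W' - W| / (W * W') := by
      intro i hi
      have e : w i / W - w' i / W' = (w i - w' i) / W + (w' i * (W' - W)) / (W * W') := by
        field_simp; ring
      rw [e]
      refine (abs_add_le _ _).trans ?_
      rw [abs_div, abs_of_pos hW, abs_div, abs_mul, abs_of_pos (hw' i hi),
        abs_of_pos (mul_pos hW hW')]
    have sum_key : ∑ i ∈ s, |w i / W - w' i / W'|
        ≤ (∑ i ∈ s, |w i - w' i|) / W + |W' - W| / W := by
      refine (Finset.sum_le_sum key).trans ?_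
      rw [Finset.sum_add_distrib, ← Finset.sum_div]
      refine add_le_add_right ?_ _
      have e3 : ∑ i ∈ s, w' i * |W' - W| / (W * W') = W' * |W' - W| / (W * W') := by
        rw [← Finset.sum_div, ← Finset.sum_mul]
      have e4 : W' * |W' - W| / (W * W') = |W' - W| / W := by
        field_simp
      rw [e3, e4]
    have hWW : |W' - W| ≤ ∑ i ∈ s, |w i - w' i| := by
      calc |W' - W| = |∑ i ∈ s, (w' i - w i)| := by rw [Finset.sum_sub_distrib]
        _ ≤ ∑ i ∈ s, |w' i - w i| := Finset.abs_sum_le_sum_abs _ _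
        _ = ∑ i ∈ s, |w i - w' i| := Finset.sum_congr rfl fun i _ => abs_sub_comm _ _
    calc ∑ i ∈ s, |w i / W - w' i / W'| * V
        = (∑ i ∈ s, |w i / W - w' i / W'|) * V := by rw [Finset.sum_mul]
      _ ≤ ((∑ i ∈ s, |w i - w' i|) / W + |W' - W| / W) * V :=
          mul_le_mul_of_nonneg_right sum_key hV
      _ ≤ ((∑ i ∈ s, |w i - w' i|) / W + (∑ i ∈ s, |w i - w' i|) / W) * V := by
          refine mul_le_mul_of_nonneg_right (add_le_add_right ?_ _) hV
          gcongr
      _ = 2 * V * W⁻¹ * ∑ i ∈ s, |w i - w' i| := by field_simp; ring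
  rw [t1]
  exact add_le_add_right t2 _

end helpers

lemma simDist_card_bound {d n : ℕ} (x y : Fin n → (Fin d → ℝ)) (δ : ℝ) (hδ : 0 < δ)
    (h : simDist x y ≤ δ) :
    (1 - 2*δ) * n ≤ ((Finset.univ.filter (fun i => ‖x i - y i‖ ≤ 2*δ)).card : ℝ) := by
  set S : Set ℝ := {δ : ℝ | 0 ≤ δ ∧
    (1 - δ) * n ≤ ((Finset.univ.filter (fun i => ‖x i - y i‖ ≤ δ)).card : ℝ)} with hS
  have hne : S.Nonempty := ⟨1, by norm_num, by simp⟩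
  have hbdd : BddBelow S := ⟨0, fun a ha => ha.1⟩
  have h2 : ∃ a ∈ S, a < 2*δ := by
    refine exists_lt_of_csInf_lt hne ?_
    calc sInf S = simDist x y := rfl
      _ ≤ δ := h
      _ < 2*δ := by linarith
  obtain ⟨a, ⟨ha0, hacard⟩, halt⟩ := h2
  calc (1 - 2*δ) * n ≤ (1 - a) * n :=
        mul_le_mul_of_nonneg_right (by linarith) (Nat.cast_nonneg n)
    _ ≤ ((Finset.univ.filter (fun i => ‖x i - y i‖ ≤ a)).card : ℝ) := hacard
    _ ≤ ((Finset.univ.filter (fun i => ‖x i - y i‖ ≤ 2*δ)).card : ℝ) := by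
        refine Nat.cast_le.mpr (Finset.card_le_card (Finset.monotone_filter_right _ ?_))
        intro i _ hle
        exact le_trans hle halt.le

/-- **Weak lemma.** Global similarity together with last-position similarity of the inputs
forces closeness of the last output vectors of a decoder-only attention layer with compact
positional encoding. -/
theorem attention_layer_last_output_close {d : ℕ} (L : AttentionLayer d) (hL : L.CompactPE)
    (K : Set (Fin d → ℝ)) (hK : IsCompact K) :
    ∀ ε : ℝ, 0 < ε → ∃ δ : ℝ, 0 < δ ∧ ∀ (n : ℕ) (x y : Fin (n + 1) → (Fin d → ℝ)),
      (∀ i, x i ∈ K) → (∀ i, y i ∈ K) →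
      simDist x y ≤ δ → ‖x (Fin.last n) - y (Fin.last n)‖ ≤ δ →
      ‖L.apply x (Fin.last n) - L.apply y (Fin.last n)‖ ≤ ε := by
  intro ε hε
  obtain ⟨P, hPc, hPmem⟩ := hL
  set K₀ : Set (Fin d → ℝ) := K ∪ {0} with hK₀def
  have hK₀c : IsCompact K₀ := hK.union isCompact_singleton
  set P₀ : Set (Fin d → ℝ) := P ∪ {0} with hP₀def
  have hP₀c : IsCompact P₀ := hPc.union isCompact_singleton
  have hP₀mem : ∀ i j : ℕ, L.p i j ∈ P₀ := fun i j => Or.inl (hPmem i j)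
  -- value bound
  obtain ⟨V₀, hV₀⟩ := hK₀c.exists_bound_of_continuousOn L.val_cont.continuousOn
  set V : ℝ := max V₀ 1 with hVdef
  have hV1 : (1:ℝ) ≤ V := le_max_right _ _
  have hV0 : (0:ℝ) < V := lt_of_lt_of_le one_pos hV1
  have hVb : ∀ z ∈ K₀, ‖L.val z‖ ≤ V := fun z hz => (hV₀ z hz).trans (le_max_left _ _)
  -- weight min/max
  set g : (Fin d → ℝ) × (Fin d → ℝ) × (Fin d → ℝ) → ℝ := fun t => L.w t.1 t.2.1 t.2.2 with hg
  set S3 : Set ((Fin d → ℝ) × (Fin d → ℝ) × (Fin d → ℝ)) := K₀ ×ˢ K₀ ×ˢ P₀ with hS3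
  have hS3c : IsCompact S3 := hK₀c.prod (hK₀c.prod hP₀c)
  have hS3ne : S3.Nonempty :=
    ⟨(0, 0, 0), Or.inr rfl, Or.inr rfl, Or.inr rfl⟩
  obtain ⟨tm, htm, hmin⟩ := hS3c.exists_isMinOn hS3ne L.w_cont.continuousOn
  obtain ⟨tM, htM, hmax⟩ := hS3c.exists_isMaxOn hS3ne L.w_cont.continuousOn
  set m : ℝ := g tm with hm
  set M : ℝ := g tM with hM
  have hm0 : 0 < m := L.w_pos _ _ _
  have hmle : ∀ t ∈ S3, m ≤ g t := fun t ht => hmin ht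
  have hMle : ∀ t ∈ S3, g t ≤ M := fun t ht => hmax ht
  have hmM : m ≤ M := (hmle tM htM).trans (le_refl _) |>.trans (hMle tM htM) |>.trans (le_refl _)
  have hM0 : 0 < M := lt_of_lt_of_le hm0 hmM
  -- uniform continuity of F
  set C : Set ((Fin d → ℝ) × (Fin d → ℝ)) := Metric.closedBall (0:Fin d → ℝ) V ×ˢ K₀ with hC
  have hCc : IsCompact C := (isCompact_closedBall _ _).prod hK₀c
  obtain ⟨δF, hδF0, hδF⟩ := Metric.uniformContinuousOn_iff.mp
    (hCc.uniformContinuousOn_of_continuous L.F_cont.continuousOn) ε hε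
  -- uniform continuity of val
  obtain ⟨δv, hδv0, hδv⟩ := Metric.uniformContinuousOn_iff.mp
    (hK₀c.uniformContinuousOn_of_continuous L.val_cont.continuousOn) (δF/4) (by linarith)
  -- uniform continuity of w
  obtain ⟨δw, hδw0, hδw⟩ := Metric.uniformContinuousOn_iff.mp
    (hS3c.uniformContinuousOn_of_continuous L.w_cont.continuousOn)
    (m * δF / (16 * V)) (div_pos (mul_pos hm0 hδF0) (mul_pos (by norm_num) hV0))
  set δ : ℝ := min (min (δv/3) (δw/3)) (min (δF/2) (m*δF/(64*V*M))) with hδdef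
  have hδ0 : 0 < δ := by
    refine lt_min (lt_min (by linarith) (by linarith)) (lt_min (by linarith)
      (div_pos (mul_pos hm0 hδF0) (mul_pos (mul_pos (by norm_num) hV0) hM0)))
  refine ⟨δ, hδ0, ?_⟩
  intro n x y hx hy hsim hlast
  have hδv' : 2*δ < δv := by
    have h1 : δ ≤ δv/3 := le_trans (min_le_left _ _) (min_le_left _ _)
    linarith
  have hδw' : 2*δ < δw := by
    have h1 : δ ≤ δw/3 := le_trans (min_le_left _ _) (min_le_right _ _)
    linarith
  have hδF2 : δ ≤ δF/2 := le_trans (min_le_right _ _) (min_le_left _ _)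
  have hδM : δ ≤ m*δF/(64*V*M) := le_trans (min_le_right _ _) (min_le_right _ _)
  have hx₀ : ∀ i, x i ∈ K₀ := fun i => Or.inl (hx i)
  have hy₀ : ∀ i, y i ∈ K₀ := fun i => Or.inl (hy i)
  set j : Fin (n+1) := Fin.last n with hj
  have hIic : Finset.Iic j = Finset.univ := by
    ext i; simpa using Fin.le_last i
  -- abbreviations
  set wx : Fin (n+1) → ℝ := fun i => L.w (x i) (x j) (L.p i.val j.val) with hwx
  set wy : Fin (n+1) → ℝ := fun i => L.w (y i) (y j) (L.p i.val j.val) with hwy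
  have hwxpos : ∀ i ∈ (univ : Finset (Fin (n+1))), 0 < wx i := fun i _ => L.w_pos _ _ _
  have hwypos : ∀ i ∈ (univ : Finset (Fin (n+1))), 0 < wy i := fun i _ => L.w_pos _ _ _
  have htriple_x : ∀ i : Fin (n+1), ((x i, x j, L.p i.val j.val)) ∈ S3 :=
    fun i => ⟨hx₀ i, hx₀ j, hP₀mem _ _⟩
  have htriple_y : ∀ i : Fin (n+1), ((y i, y j, L.p i.val j.val)) ∈ S3 :=
    fun i => ⟨hy₀ i, hy₀ j, hP₀mem _ _⟩
  have hwxM : ∀ i, wx i ≤ M := fun i => hMle _ (htriple_x i)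
  have hwyM : ∀ i, wy i ≤ M := fun i => hMle _ (htriple_y i)
  have hwxm : ∀ i, m ≤ wx i := fun i => hmle _ (htriple_x i)
  have hvx : ∀ i ∈ (univ : Finset (Fin (n+1))), ‖L.val (x i)‖ ≤ V := fun i _ => hVb _ (hx₀ i)
  have hvy : ∀ i ∈ (univ : Finset (Fin (n+1))), ‖L.val (y i)‖ ≤ V := fun i _ => hVb _ (hy₀ i)
  set a : Fin d → ℝ := (∑ i ∈ univ, wx i)⁻¹ • ∑ i ∈ univ, wx i • L.val (x i) with ha
  set a' : Fin d → ℝ := (∑ i ∈ univ, wy i)⁻¹ • ∑ i ∈ univ, wy i • L.val (y i) with ha'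
  have hattnx : L.attn x j = a := by
    rw [AttentionLayer.attn, hIic]
  have hattny : L.attn y j = a' := by
    rw [AttentionLayer.attn, hIic]
  have huniv_ne : (univ : Finset (Fin (n+1))).Nonempty := ⟨j, mem_univ j⟩
  have haV : ‖a‖ ≤ V := avg_norm_le _ _ _ _ hwxpos hvx huniv_ne
  have haV' : ‖a'‖ ≤ V := avg_norm_le _ _ _ _ hwypos hvy huniv_ne
  -- good/bad sets
  set G : Finset (Fin (n+1)) := univ.filter (fun i => ‖x i - y i‖ ≤ 2*δ) with hG
  set B : Finset (Fin (n+1)) := univ.filter (fun i => ¬ ‖x i - y i‖ ≤ 2*δ) with hB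
  have hGcard : (1 - 2*δ) * ((n+1 : ℕ) : ℝ) ≤ (G.card : ℝ) :=
    simDist_card_bound x y δ hδ0 hsim
  have hGB : G.card + B.card = n+1 := by
    rw [hG, hB, Finset.card_filter_add_card_filter_not]
    simp
  have hBcard : (B.card : ℝ) ≤ 2*δ*((n:ℝ)+1) := by
    have h1 : (G.card : ℝ) + (B.card : ℝ) = (n:ℝ)+1 := by
      exact_mod_cast congrArg (Nat.cast : ℕ → ℝ) hGB
    push_cast at hGcard
    linarith
  -- sum of weights lower bound
  have hWlow : ((n:ℝ)+1) * m ≤ ∑ i ∈ univ, wx i := by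
    have := Finset.card_nsmul_le_sum (univ : Finset (Fin (n+1))) wx m (fun i _ => hwxm i)
    simpa [nsmul_eq_mul, Finset.card_univ] using this
  have hWpos : 0 < ∑ i ∈ univ, wx i := Finset.sum_pos hwxpos huniv_ne
  have hn1pos : (0:ℝ) < (n:ℝ)+1 := by positivity
  -- bound on value differences, good indices
  have hval_good : ∀ i ∈ G, ‖L.val (x i) - L.val (y i)‖ ≤ δF/4 := by
    intro i hi
    rw [hG, Finset.mem_filter] at hi
    have hd : dist (x i) (y i) < δv := by rw [dist_eq_norm]; linarith [hi.2]
    have := hδv (x i) (hx₀ i) (y i) (hy₀ i) hd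
    rw [dist_eq_norm] at this
    linarith
  have hval_bad : ∀ i : Fin (n+1), ‖L.val (x i) - L.val (y i)‖ ≤ 2*V := by
    intro i
    calc ‖L.val (x i) - L.val (y i)‖ ≤ ‖L.val (x i)‖ + ‖L.val (y i)‖ := norm_sub_le _ _
      _ ≤ 2*V := by have := hVb _ (hx₀ i); have := hVb _ (hy₀ i); linarith
  -- bound on weight differences, good indices
  have hw_good : ∀ i ∈ G, |wx i - wy i| ≤ m * δF / (16*V) := by
    intro i hi
    rw [hG, Finset.mem_filter] at hi
    have hd : dist ((x i, x j, L.p i.val j.val)) ((y i, y j, L.p i.val j.val)) < δw := by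
      rw [Prod.dist_eq, Prod.dist_eq]
      simp only [dist_self]
      rw [dist_eq_norm, dist_eq_norm]
      have h1 : ‖x i - y i‖ ≤ 2*δ := hi.2
      have h2 : ‖x j - y j‖ ≤ δ := hlast
      have h3 : (0:ℝ) ≤ 2*δ := by linarith
      refine lt_of_le_of_lt ?_ hδw'
      simp only [sup_le_iff]
      exact ⟨h1, by linarith, by linarith⟩
    have := hδw _ (htriple_x i) _ (htriple_y i) hd
    rw [Real.dist_eq] at this
    exact this.le
  have hw_bad : ∀ i : Fin (n+1), |wx i - wy i| ≤ 2*M := by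
    intro i
    rw [abs_sub_le_iff]
    constructor
    · have := hwxM i; have := (hwypos i (mem_univ i)); linarith
    · have := hwyM i; have := (hwxpos i (mem_univ i)); linarith
  -- the two sums
  have hsum1 : ∑ i ∈ univ, wx i * ‖L.val (x i) - L.val (y i)‖
      ≤ (∑ i ∈ univ, wx i) * (δF/4) + 2*δ*((n:ℝ)+1) * (2*M*V) := by
    rw [← Finset.sum_filter_add_sum_filter_not univ (fun i => ‖x i - y i‖ ≤ 2*δ)]
    refine add_le_add ?_ ?_
    · calc ∑ i ∈ G, wx i * ‖L.val (x i) - L.val (y i)‖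
          ≤ ∑ i ∈ G, wx i * (δF/4) := by
            refine Finset.sum_le_sum fun i hi => ?_
            exact mul_le_mul_of_nonneg_left (hval_good i hi) (hwxpos i (mem_univ i)).le
        _ = (∑ i ∈ G, wx i) * (δF/4) := by rw [Finset.sum_mul]
        _ ≤ (∑ i ∈ univ, wx i) * (δF/4) := by
            refine mul_le_mul_of_nonneg_right
              (Finset.sum_le_sum_of_subset_of_nonneg (Finset.subset_univ G)
                (fun i _ _ => (hwxpos i (mem_univ i)).le)) (by linarith)
    · calc ∑ i ∈ B, wx i * ‖L.val (x i) - L.val (y i)‖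
          ≤ ∑ i ∈ B, M * (2*V) := by
            refine Finset.sum_le_sum fun i hi => ?_
            exact mul_le_mul (hwxM i) (hval_bad i) (norm_nonneg _) hM0.le
        _ = (B.card : ℝ) * (M * (2*V)) := by rw [Finset.sum_const, nsmul_eq_mul]
        _ ≤ 2*δ*((n:ℝ)+1) * (2*M*V) := by
            have h2 : (0:ℝ) ≤ M * (2*V) := le_of_lt (mul_pos hM0 (mul_pos two_pos hV0))
            calc (B.card : ℝ) * (M * (2*V)) ≤ 2*δ*((n:ℝ)+1) * (M*(2*V)) :=
                mul_le_mul_of_nonneg_right hBcard h2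
              _ = 2*δ*((n:ℝ)+1) * (2*M*V) := by ring
  have hsum2 : ∑ i ∈ univ, |wx i - wy i|
      ≤ ((n:ℝ)+1) * (m * δF / (16*V) + 4*δ*M) := by
    rw [← Finset.sum_filter_add_sum_filter_not univ (fun i => ‖x i - y i‖ ≤ 2*δ)]
    have hGsub : (G.card : ℝ) ≤ (n:ℝ)+1 := by
      have := Finset.card_le_card (Finset.subset_univ G)
      rw [Finset.card_univ, Fintype.card_fin] at this
      exact_mod_cast this
    calc ∑ i ∈ G, |wx i - wy i| + ∑ i ∈ B, |wx i - wy i|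
        ≤ (G.card : ℝ) * (m * δF / (16*V)) + (B.card : ℝ) * (2*M) := by
          refine add_le_add ?_ ?_
          · calc ∑ i ∈ G, |wx i - wy i| ≤ ∑ i ∈ G, m * δF / (16*V) :=
                Finset.sum_le_sum hw_good
              _ = (G.card : ℝ) * (m * δF / (16*V)) := by rw [Finset.sum_const, nsmul_eq_mul]
          · calc ∑ i ∈ B, |wx i - wy i| ≤ ∑ i ∈ B, 2*M :=
                Finset.sum_le_sum (fun i _ => hw_bad i)
              _ = (B.card : ℝ) * (2*M) := by rw [Finset.sum_const, nsmul_eq_mul]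
      _ ≤ ((n:ℝ)+1) * (m * δF / (16*V)) + (2*δ*((n:ℝ)+1)) * (2*M) := by
          refine add_le_add
            (mul_le_mul_of_nonneg_right hGsub
              (le_of_lt (div_pos (mul_pos hm0 hδF0) (mul_pos (by norm_num) hV0))))
            (mul_le_mul_of_nonneg_right hBcard (by linarith))
      _ = ((n:ℝ)+1) * (m * δF / (16*V) + 4*δ*M) := by ring
  -- main attn bound
  have hattn_bound : ‖a - a'‖ < δF := by
    have hmain := avg_diff_bound univ wx wy (fun i => L.val (x i)) (fun i => L.val (y i)) V
      hwxpos hwypos huniv_ne hvy hV0.le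
    rw [← ha, ← ha'] at hmain
    have hWinv : (∑ i ∈ univ, wx i)⁻¹ ≤ (((n:ℝ)+1) * m)⁻¹ := by
      exact inv_anti₀ (mul_pos hn1pos hm0) hWlow
    have hterm1 : (∑ i ∈ univ, wx i)⁻¹ * (∑ i ∈ univ, wx i * ‖L.val (x i) - L.val (y i)‖)
        ≤ δF/4 + 4*δ*M*V/m := by
      calc (∑ i ∈ univ, wx i)⁻¹ * (∑ i ∈ univ, wx i * ‖L.val (x i) - L.val (y i)‖)
          ≤ (∑ i ∈ univ, wx i)⁻¹ * ((∑ i ∈ univ, wx i) * (δF/4) + 2*δ*((n:ℝ)+1) * (2*M*V)) :=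
            mul_le_mul_of_nonneg_left hsum1 (inv_nonneg.mpr hWpos.le)
        _ = δF/4 + (∑ i ∈ univ, wx i)⁻¹ * (2*δ*((n:ℝ)+1) * (2*M*V)) := by
            field_simp
        _ ≤ δF/4 + (((n:ℝ)+1) * m)⁻¹ * (2*δ*((n:ℝ)+1) * (2*M*V)) := by
            refine add_le_add_right (mul_le_mul_of_nonneg_right hWinv
              (le_of_lt (mul_pos (mul_pos (mul_pos two_pos hδ0) hn1pos)
                (mul_pos (mul_pos two_pos hM0) hV0)))) _
        _ = δF/4 + 4*δ*M*V/m := by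
            field_simp [hm0.ne', hn1pos.ne']
            ring
    have hterm2 : 2 * V * (∑ i ∈ univ, wx i)⁻¹ * (∑ i ∈ univ, |wx i - wy i|)
        ≤ 2*V*(m * δF / (16*V) + 4*δ*M)/m := by
      calc 2 * V * (∑ i ∈ univ, wx i)⁻¹ * (∑ i ∈ univ, |wx i - wy i|)
          ≤ 2 * V * (((n:ℝ)+1) * m)⁻¹ * (((n:ℝ)+1) * (m * δF / (16*V) + 4*δ*M)) := by
            refine mul_le_mul ?_ hsum2 ?_ ?_
            · exact mul_le_mul_of_nonneg_left hWinv (le_of_lt (mul_pos two_pos hV0))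
            · exact Finset.sum_nonneg fun i _ => abs_nonneg _
            · exact le_of_lt (mul_pos (mul_pos two_pos hV0)
                (inv_pos.mpr (mul_pos hn1pos hm0)))
        _ = 2*V*(m * δF / (16*V) + 4*δ*M)/m := by
            field_simp [hm0.ne', hV0.ne', hn1pos.ne']
    have hδM' : δ * (64*V*M) ≤ m * δF := by
      rwa [le_div_iff₀ (mul_pos (mul_pos (by norm_num) hV0) hM0)] at hδM
    have hd1 : 4*δ*M*V/m ≤ δF/16 := by
      rw [div_le_div_iff₀ hm0 (by norm_num : (0:ℝ) < 16)]
      calc 4*δ*M*V*16 = δ * (64*V*M) := by ring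
        _ ≤ m * δF := hδM'
        _ = δF * m := by ring
    have hd2 : 2*V*(m * δF / (16*V) + 4*δ*M)/m ≤ δF/8 + δF/8 := by
      have he : 2*V*(m * δF / (16*V))/m = δF/8 := by
        field_simp
        ring
      have hd3 : 2*V*(4*δ*M)/m ≤ δF/8 := by
        rw [div_le_div_iff₀ hm0 (by norm_num : (0:ℝ) < 8)]
        calc 2*V*(4*δ*M)*8 = δ * (64*V*M) := by ring
          _ ≤ m * δF := hδM'
          _ = δF * m := by ring
      calc 2*V*(m * δF / (16*V) + 4*δ*M)/m
          = 2*V*(m * δF / (16*V))/m + 2*V*(4*δ*M)/m := by ring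
        _ ≤ δF/8 + δF/8 := by rw [he]; linarith
    calc ‖a - a'‖ ≤ (δF/4 + 4*δ*M*V/m) + 2*V*(m * δF / (16*V) + 4*δ*M)/m :=
        hmain.trans (add_le_add hterm1 hterm2)
      _ ≤ δF/4 + δF/16 + (δF/8 + δF/8) := by linarith
      _ < δF := by linarith
  -- conclude via uniform continuity of F
  have hmemx : (a, x j) ∈ C := ⟨Metric.mem_closedBall.mpr (by rwa [dist_zero_right]), hx₀ j⟩
  have hmemy : (a', y j) ∈ C := ⟨Metric.mem_closedBall.mpr (by rwa [dist_zero_right]), hy₀ j⟩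
  have hdist : dist ((a, x j)) ((a', y j)) < δF := by
    rw [Prod.dist_eq]
    simp only [sup_lt_iff]
    constructor
    · rw [dist_eq_norm]; exact hattn_bound
    · rw [dist_eq_norm]; linarith [hlast, hδF2, hδ0]
  have hfin := hδF _ hmemx _ hmemy hdist
  simp only [AttentionLayer.apply]
  rw [hattnx, hattny]
  rw [dist_eq_norm] at hfin
  exact hfin.le
end

section
/- Let L be a d-dimensional decoder-only attention layer with compact positional encoding and let K ⊆ ℝ^d be compact. Then for every ε > 0 there exists δ > 0 such that for every n ∈ ℕ and all sequences x, x̂ ∈ K^n: if sim(x, x̂) ≤ δ and ‖x_n − x̂_n‖_∞ ≤ δ, then ‖a_n − â_n‖_∞ ≤ ε, where a_n = (Σ_{i=1}^{n} w(x_i, x_n, p(i,n)) val(x_i))/(Σ_{i=1}^{n} w(x_i, x_n, p(i,n))) and â_n = (Σ_{i=1}^{n} w(x̂_i, x̂_n, p(i,n)) val(x̂_i))/(Σ_{i=1}^{n} w(x̂_i, x̂_n, p(i,n))) are the n-th attention vectors of L on x and x̂. -/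
open Finset Filter

lemma simDist_extract {d n : ℕ} (x y : Fin n → (Fin d → ℝ)) {δ : ℝ} (hδ : 0 < δ)
    (h : simDist x y ≤ δ) :
    (1 - 2*δ) * n ≤ ((Finset.univ.filter (fun i => ‖x i - y i‖ ≤ 2*δ)).card : ℝ) := by
  have hne : {δ' : ℝ | 0 ≤ δ' ∧
      (1 - δ') * n ≤ ((Finset.univ.filter (fun i => ‖x i - y i‖ ≤ δ')).card : ℝ)}.Nonempty := by
    refine ⟨1, by norm_num, ?_⟩
    simp
  have hlt : simDist x y < 2*δ := lt_of_le_of_lt h (by linarith)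
  obtain ⟨s, hs, hslt⟩ := exists_lt_of_csInf_lt hne hlt
  obtain ⟨hs0, hscard⟩ := hs
  have hsub : Finset.univ.filter (fun i => ‖x i - y i‖ ≤ s) ⊆
      Finset.univ.filter (fun i : Fin n => ‖x i - y i‖ ≤ 2*δ) :=
    Finset.monotone_filter_right _ (fun i _ hi => le_trans hi hslt.le)
  calc (1 - 2*δ) * n ≤ (1 - s) * n :=
        mul_le_mul_of_nonneg_right (by linarith) (Nat.cast_nonneg n)
    _ ≤ _ := hscard
    _ ≤ _ := by exact_mod_cast Finset.card_le_card hsub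

set_option maxHeartbeats 1000000 in
lemma weighted_avg_diff {d m : ℕ} (hm : 0 < m) (w1 w2 : Fin m → ℝ)
    (v1 v2 : Fin m → (Fin d → ℝ)) (c C M θ dv : ℝ) (hc : 0 < c)
    (hw1c : ∀ i, c ≤ w1 i) (hw1C : ∀ i, w1 i ≤ C)
    (hw2c : ∀ i, c ≤ w2 i) (hw2C : ∀ i, w2 i ≤ C)
    (hv1 : ∀ i, ‖v1 i‖ ≤ M) (hv2 : ∀ i, ‖v2 i‖ ≤ M)
    (G : Finset (Fin m)) (hGv : ∀ i ∈ G, ‖v1 i - v2 i‖ ≤ θ)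
    (hGw : ∀ i ∈ G, |w1 i - w2 i| ≤ θ) (hθ : 0 ≤ θ)
    (hBad : ((Finset.univ \ G).card : ℝ) ≤ dv * m) (hdv : 0 ≤ dv) :
    ‖(∑ i, w1 i)⁻¹ • ∑ i, w1 i • v1 i - (∑ i, w2 i)⁻¹ • ∑ i, w2 i • v2 i‖ ≤
      θ * (1 + 2*M/c) + dv * (8*M*C/c) := by
  set S1 := ∑ i, w1 i with hS1
  set S2 := ∑ i, w2 i with hS2
  have hmR : (0:ℝ) < m := by exact_mod_cast hm
  have hM0 : 0 ≤ M := le_trans (norm_nonneg _) (hv1 ⟨0, hm⟩)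
  have hcC : c ≤ C := le_trans (hw1c ⟨0, hm⟩) (hw1C ⟨0, hm⟩)
  have hC0 : 0 < C := lt_of_lt_of_le hc hcC
  have hS1ge : (m:ℝ) * c ≤ S1 := by
    rw [hS1]
    calc (m:ℝ)*c = ∑ _i : Fin m, c := by simp [mul_comm]
      _ ≤ _ := Finset.sum_le_sum fun i _ => hw1c i
  have hS2ge : (m:ℝ) * c ≤ S2 := by
    rw [hS2]
    calc (m:ℝ)*c = ∑ _i : Fin m, c := by simp [mul_comm]
      _ ≤ _ := Finset.sum_le_sum fun i _ => hw2c i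
  have hS1pos : 0 < S1 := lt_of_lt_of_le (by positivity) hS1ge
  have hS2pos : 0 < S2 := lt_of_lt_of_le (by positivity) hS2ge
  have hEq : S1⁻¹ • ∑ i, w1 i • v1 i - S2⁻¹ • ∑ i, w2 i • v2 i
      = ∑ i, ((S1⁻¹ * w1 i) • (v1 i - v2 i) + (S1⁻¹ * w1 i - S2⁻¹ * w2 i) • v2 i) := by
    rw [Finset.smul_sum, Finset.smul_sum, ← Finset.sum_sub_distrib]
    refine Finset.sum_congr rfl fun i _ => ?_
    rw [smul_smul, smul_smul, smul_sub, sub_smul]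
    abel
  have hAle : ∀ i, S1⁻¹ * w1 i ≤ ((m:ℝ)*c)⁻¹ * C := by
    intro i
    have h1 : S1⁻¹ ≤ ((m:ℝ)*c)⁻¹ := by
      apply inv_anti₀ (by positivity) hS1ge
    exact mul_le_mul h1 (hw1C i) (le_trans hc.le (hw1c i)) (by positivity)
  have hApos : ∀ i, 0 ≤ S1⁻¹ * w1 i := fun i =>
    mul_nonneg (inv_nonneg.mpr hS1pos.le) (le_trans hc.le (hw1c i))
  have hAsum : ∑ i, S1⁻¹ * w1 i = 1 := by
    rw [← Finset.mul_sum, ← hS1, inv_mul_cancel₀ hS1pos.ne']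
  have hfirst : ∑ i, (S1⁻¹ * w1 i) * ‖v1 i - v2 i‖ ≤ θ + dv * (2*M*C/c) := by
    rw [← Finset.sum_add_sum_compl G]
    have hgood : ∑ i ∈ G, (S1⁻¹ * w1 i) * ‖v1 i - v2 i‖ ≤ θ := by
      calc ∑ i ∈ G, (S1⁻¹ * w1 i) * ‖v1 i - v2 i‖
          ≤ ∑ i ∈ G, (S1⁻¹ * w1 i) * θ :=
            Finset.sum_le_sum fun i hi =>
              mul_le_mul_of_nonneg_left (hGv i hi) (hApos i)
        _ ≤ ∑ i, (S1⁻¹ * w1 i) * θ :=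
            Finset.sum_le_sum_of_subset_of_nonneg (Finset.subset_univ G)
              (fun i _ _ => mul_nonneg (hApos i) hθ)
        _ = θ := by rw [← Finset.sum_mul, hAsum, one_mul]
    have hbad : ∑ i ∈ Gᶜ, (S1⁻¹ * w1 i) * ‖v1 i - v2 i‖ ≤ dv * (2*M*C/c) := by
      have hterm : ∀ i ∈ Gᶜ, (S1⁻¹ * w1 i) * ‖v1 i - v2 i‖ ≤ ((m:ℝ)*c)⁻¹ * C * (2*M) := by
        intro i _
        have hv : ‖v1 i - v2 i‖ ≤ 2*M := by
          calc ‖v1 i - v2 i‖ ≤ ‖v1 i‖ + ‖v2 i‖ := norm_sub_le _ _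
            _ ≤ 2*M := by linarith [hv1 i, hv2 i]
        exact mul_le_mul (hAle i) hv (norm_nonneg _) (by positivity)
      calc ∑ i ∈ Gᶜ, (S1⁻¹ * w1 i) * ‖v1 i - v2 i‖
          ≤ (Gᶜ.card : ℝ) * (((m:ℝ)*c)⁻¹ * C * (2*M)) := by
            have := Finset.sum_le_card_nsmul Gᶜ _ _ hterm
            simpa [nsmul_eq_mul] using this
        _ ≤ (dv * m) * (((m:ℝ)*c)⁻¹ * C * (2*M)) := by
            apply mul_le_mul_of_nonneg_right _ (by positivity)
            rw [Finset.compl_eq_univ_sdiff]; exact hBad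
        _ = dv * (2*M*C/c) := by field_simp
    linarith
  have hΔw : ∑ i, |w1 i - w2 i| ≤ (m:ℝ)*θ + dv*m*C := by
    rw [← Finset.sum_add_sum_compl G]
    have hgood : ∑ i ∈ G, |w1 i - w2 i| ≤ (m:ℝ)*θ := by
      calc ∑ i ∈ G, |w1 i - w2 i| ≤ (G.card : ℝ) * θ := by
            have := Finset.sum_le_card_nsmul G _ _ (fun i hi => hGw i hi)
            simpa [nsmul_eq_mul] using this
        _ ≤ (m:ℝ)*θ := by
            apply mul_le_mul_of_nonneg_right _ hθ
            exact_mod_cast Finset.card_le_card (Finset.subset_univ G) |>.trans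
              (by simp)
    have hbad : ∑ i ∈ Gᶜ, |w1 i - w2 i| ≤ dv*m*C := by
      have hterm : ∀ i ∈ Gᶜ, |w1 i - w2 i| ≤ C := by
        intro i _
        rw [abs_sub_le_iff]
        constructor <;> nlinarith [hw1c i, hw2c i, hw1C i, hw2C i]
      calc ∑ i ∈ Gᶜ, |w1 i - w2 i| ≤ (Gᶜ.card : ℝ) * C := by
            have := Finset.sum_le_card_nsmul Gᶜ _ _ hterm
            simpa [nsmul_eq_mul] using this
        _ ≤ (dv * m) * C := by
            apply mul_le_mul_of_nonneg_right _ hC0.le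
            rw [Finset.compl_eq_univ_sdiff]; exact hBad
        _ = dv*m*C := by ring
    linarith
  have hSdiff : |S2 - S1| ≤ ∑ i, |w1 i - w2 i| := by
    rw [hS1, hS2, ← Finset.sum_sub_distrib]
    refine le_trans (Finset.abs_sum_le_sum_abs _ _) ?_
    exact Finset.sum_le_sum fun i _ => by rw [abs_sub_comm]
  have hsecond : ∑ i, |S1⁻¹*w1 i - S2⁻¹*w2 i| * M ≤ 2*M/c * (θ + dv*C) := by
    have hptw : ∀ i, |S1⁻¹*w1 i - S2⁻¹*w2 i| ≤
        S1⁻¹*|w1 i - w2 i| + (|S2 - S1|/(S1*S2))*w2 i := by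
      intro i
      have hsplit : S1⁻¹*w1 i - S2⁻¹*w2 i = S1⁻¹*(w1 i - w2 i) + (S1⁻¹ - S2⁻¹)*w2 i := by
        ring
      rw [hsplit]
      refine le_trans (abs_add_le _ _) ?_
      have h1 : |S1⁻¹*(w1 i - w2 i)| = S1⁻¹*|w1 i - w2 i| := by
        rw [abs_mul, abs_of_pos (inv_pos.mpr hS1pos)]
      have h2 : |(S1⁻¹ - S2⁻¹)*w2 i| = (|S2 - S1|/(S1*S2))*w2 i := by
        rw [abs_mul, abs_of_pos (lt_of_lt_of_le hc (hw2c i)),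
          inv_sub_inv hS1pos.ne' hS2pos.ne', abs_div,
          abs_of_pos (mul_pos hS1pos hS2pos)]
      rw [h1, h2]
    have hsum : ∑ i, |S1⁻¹*w1 i - S2⁻¹*w2 i| ≤ 2 * (∑ i, |w1 i - w2 i|) / S1 := by
      calc ∑ i, |S1⁻¹*w1 i - S2⁻¹*w2 i|
          ≤ ∑ i, (S1⁻¹*|w1 i - w2 i| + (|S2 - S1|/(S1*S2))*w2 i) :=
            Finset.sum_le_sum fun i _ => hptw i
        _ = S1⁻¹*(∑ i, |w1 i - w2 i|) + (|S2 - S1|/(S1*S2))*S2 := by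
            rw [Finset.sum_add_distrib, ← Finset.mul_sum, ← Finset.mul_sum, hS2]
        _ = (∑ i, |w1 i - w2 i|)/S1 + |S2 - S1|/S1 := by
            field_simp
        _ ≤ (∑ i, |w1 i - w2 i|)/S1 + (∑ i, |w1 i - w2 i|)/S1 := by
            gcongr
        _ = 2 * (∑ i, |w1 i - w2 i|) / S1 := by ring
    have habs0 : 0 ≤ ∑ i, |w1 i - w2 i| := Finset.sum_nonneg fun i _ => abs_nonneg _
    have hfin : 2 * (∑ i, |w1 i - w2 i|) / S1 ≤ 2/c * (θ + dv*C) := by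
      calc 2 * (∑ i, |w1 i - w2 i|) / S1 ≤ 2 * ((m:ℝ)*θ + dv*m*C) / ((m:ℝ)*c) := by
            gcongr
        _ = 2/c * (θ + dv*C) := by field_simp
    calc ∑ i, |S1⁻¹*w1 i - S2⁻¹*w2 i| * M = (∑ i, |S1⁻¹*w1 i - S2⁻¹*w2 i|) * M := by
          rw [Finset.sum_mul]
      _ ≤ (2/c * (θ + dv*C)) * M := by
          apply mul_le_mul_of_nonneg_right (le_trans hsum hfin) hM0
      _ = 2*M/c * (θ + dv*C) := by ring
  calc ‖S1⁻¹ • ∑ i, w1 i • v1 i - S2⁻¹ • ∑ i, w2 i • v2 i‖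
      = ‖∑ i, ((S1⁻¹ * w1 i) • (v1 i - v2 i) + (S1⁻¹ * w1 i - S2⁻¹ * w2 i) • v2 i)‖ := by
        rw [hEq]
    _ ≤ ∑ i, ‖(S1⁻¹ * w1 i) • (v1 i - v2 i) + (S1⁻¹ * w1 i - S2⁻¹ * w2 i) • v2 i‖ :=
        norm_sum_le _ _
    _ ≤ ∑ i, ((S1⁻¹ * w1 i) * ‖v1 i - v2 i‖ + |S1⁻¹*w1 i - S2⁻¹*w2 i| * M) := by
        refine Finset.sum_le_sum fun i _ => ?_
        refine le_trans (norm_add_le _ _) ?_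
        rw [norm_smul, norm_smul, Real.norm_eq_abs, Real.norm_eq_abs,
          abs_of_nonneg (hApos i)]
        exact add_le_add le_rfl (mul_le_mul_of_nonneg_left (hv2 i) (abs_nonneg _))
    _ = (∑ i, (S1⁻¹ * w1 i) * ‖v1 i - v2 i‖) + ∑ i, |S1⁻¹*w1 i - S2⁻¹*w2 i| * M :=
        Finset.sum_add_distrib
    _ ≤ (θ + dv * (2*M*C/c)) + 2*M/c * (θ + dv*C) := by linarith
    _ ≤ θ * (1 + 2*M/c) + dv * (8*M*C/c) := by
        have h2 : 0 ≤ dv * (M*C/c) := by positivity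
        have h3 : c ≠ 0 := hc.ne'
        field_simp
        nlinarith [mul_nonneg (mul_nonneg hdv hM0) hC0.le]

/-- Global similarity together with last-position similarity of the inputs forces closeness
of the last attention vectors of a decoder-only attention layer with compact positional
encoding. -/
theorem attention_vector_close {d : ℕ} (L : AttentionLayer d) (hL : L.CompactPE)
    (K : Set (Fin d → ℝ)) (hK : IsCompact K) :
    ∀ ε : ℝ, 0 < ε → ∃ δ : ℝ, 0 < δ ∧ ∀ (n : ℕ) (x y : Fin (n + 1) → (Fin d → ℝ)),
      (∀ i, x i ∈ K) → (∀ i, y i ∈ K) →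
      simDist x y ≤ δ → ‖x (Fin.last n) - y (Fin.last n)‖ ≤ δ →
      ‖L.attn x (Fin.last n) - L.attn y (Fin.last n)‖ ≤ ε := by
  obtain ⟨P, hPc, hPmem⟩ := hL
  rcases K.eq_empty_or_nonempty with hKe | hKne
  · intro ε hε
    exact ⟨1, one_pos, fun n x y hx _ _ _ => absurd (hx 0) (by simp [hKe])⟩
  have hPne : P.Nonempty := ⟨L.p 0 0, hPmem 0 0⟩
  set T : Set ((Fin d → ℝ) × (Fin d → ℝ) × (Fin d → ℝ)) := K ×ˢ K ×ˢ P with hT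
  have hTc : IsCompact T := hK.prod (hK.prod hPc)
  have hTne : T.Nonempty := hKne.prod (hKne.prod hPne)
  have hg : Continuous (fun t : (Fin d → ℝ) × (Fin d → ℝ) × (Fin d → ℝ) =>
    L.w t.1 t.2.1 t.2.2) := L.w_cont
  obtain ⟨t0, ht0, hmin'⟩ := hTc.exists_isMinOn hTne hg.continuousOn
  obtain ⟨t1, ht1, hmax'⟩ := hTc.exists_isMaxOn hTne hg.continuousOn
  have hmin : ∀ z ∈ T, L.w t0.1 t0.2.1 t0.2.2 ≤ L.w z.1 z.2.1 z.2.2 :=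
    fun z hz => hmin' hz
  have hmax : ∀ z ∈ T, L.w z.1 z.2.1 z.2.2 ≤ L.w t1.1 t1.2.1 t1.2.2 :=
    fun z hz => hmax' hz
  set c := L.w t0.1 t0.2.1 t0.2.2 with hcdef
  set C := L.w t1.1 t1.2.1 t1.2.2 with hCdef
  have hc : 0 < c := L.w_pos _ _ _
  have hC : 0 < C := L.w_pos _ _ _
  obtain ⟨z0, hz0, hMmax'⟩ := hK.exists_isMaxOn hKne
    (continuous_norm.comp L.val_cont).continuousOn
  have hMmax : ∀ z ∈ K, ‖L.val z‖ ≤ ‖L.val z0‖ := fun z hz => hMmax' hz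
  set M := max ‖L.val z0‖ 1 with hMdef
  have hM1 : (1:ℝ) ≤ M := le_max_right _ _
  have hM0 : 0 < M := lt_of_lt_of_le one_pos hM1
  have hvM : ∀ z ∈ K, ‖L.val z‖ ≤ M := fun z hz => le_trans (hMmax z hz) (le_max_left _ _)
  have hval_uc := Metric.uniformContinuousOn_iff.mp
    (hK.uniformContinuousOn_of_continuous L.val_cont.continuousOn)
  have hw_uc := Metric.uniformContinuousOn_iff.mp
    (hTc.uniformContinuousOn_of_continuous hg.continuousOn)
  intro ε hε
  set R : ℝ := 1 + 2*M/c + 16*M*C/c with hRdef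
  have hR : 0 < R := by positivity
  set θ : ℝ := ε/(2*R) with hθdef
  have hθ : 0 < θ := by positivity
  obtain ⟨η1, hη1, hval⟩ := hval_uc θ hθ
  obtain ⟨η2, hη2, hw⟩ := hw_uc θ hθ
  set δ : ℝ := min (min η1 η2 / 4) (ε/(2*R)) with hδdef
  have hδpos : 0 < δ := by positivity
  refine ⟨δ, hδpos, ?_⟩
  intro n x y hx hy hsim hlast
  have h2δη1 : 2*δ < η1 := by
    have h1 : δ ≤ min η1 η2 / 4 := min_le_left _ _
    have h2 : min η1 η2 ≤ η1 := min_le_left _ _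
    nlinarith [lt_min hη1 hη2]
  have h2δη2 : 2*δ < η2 := by
    have h1 : δ ≤ min η1 η2 / 4 := min_le_left _ _
    have h2 : min η1 η2 ≤ η2 := min_le_right _ _
    nlinarith [lt_min hη1 hη2]
  have hIic : Finset.Iic (Fin.last n) = (Finset.univ : Finset (Fin (n+1))) := by
    ext i; simp [Fin.le_last]
  set G : Finset (Fin (n+1)) := Finset.univ.filter (fun i => ‖x i - y i‖ ≤ 2*δ) with hGdef
  have hGcard : (1 - 2*δ) * ((n+1 : ℕ) : ℝ) ≤ (G.card : ℝ) :=
    simDist_extract x y hδpos hsim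
  have hGle : G.card ≤ n+1 := by
    calc G.card ≤ (Finset.univ : Finset (Fin (n+1))).card :=
          Finset.card_le_card (Finset.subset_univ G)
      _ = n+1 := by simp
  have hBad : (((Finset.univ \ G).card : ℕ) : ℝ) ≤ (2*δ) * ((n+1 : ℕ) : ℝ) := by
    have h1 : (Finset.univ \ G).card = (n+1) - G.card := by
      rw [Finset.card_sdiff_of_subset (Finset.subset_univ G)]; simp
    have h2 : (((Finset.univ \ G).card : ℕ) : ℝ) = ((n+1 : ℕ) : ℝ) - (G.card : ℝ) := by
      rw [h1, Nat.cast_sub hGle]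
    rw [h2]
    linarith
  have hw1c : ∀ i : Fin (n+1), c ≤ L.w (x i) (x (Fin.last n)) (L.p i.val n) :=
    fun i => hmin (x i, x (Fin.last n), L.p i.val n) ⟨hx i, hx (Fin.last n), hPmem i.val n⟩
  have hw1C : ∀ i : Fin (n+1), L.w (x i) (x (Fin.last n)) (L.p i.val n) ≤ C :=
    fun i => hmax (x i, x (Fin.last n), L.p i.val n) ⟨hx i, hx (Fin.last n), hPmem i.val n⟩
  have hw2c : ∀ i : Fin (n+1), c ≤ L.w (y i) (y (Fin.last n)) (L.p i.val n) :=
    fun i => hmin (y i, y (Fin.last n), L.p i.val n) ⟨hy i, hy (Fin.last n), hPmem i.val n⟩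
  have hw2C : ∀ i : Fin (n+1), L.w (y i) (y (Fin.last n)) (L.p i.val n) ≤ C :=
    fun i => hmax (y i, y (Fin.last n), L.p i.val n) ⟨hy i, hy (Fin.last n), hPmem i.val n⟩
  have hv1 : ∀ i : Fin (n+1), ‖L.val (x i)‖ ≤ M := fun i => hvM _ (hx i)
  have hv2 : ∀ i : Fin (n+1), ‖L.val (y i)‖ ≤ M := fun i => hvM _ (hy i)
  have hGv : ∀ i ∈ G, ‖L.val (x i) - L.val (y i)‖ ≤ θ := by
    intro i hi
    have hxy : ‖x i - y i‖ ≤ 2*δ := by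
      have := Finset.mem_filter.mp hi
      exact this.2
    have hd : dist (x i) (y i) < η1 := by rw [dist_eq_norm]; linarith
    have := hval (x i) (hx i) (y i) (hy i) hd
    rw [dist_eq_norm] at this
    exact this.le
  have hGw : ∀ i ∈ G, |L.w (x i) (x (Fin.last n)) (L.p i.val n)
      - L.w (y i) (y (Fin.last n)) (L.p i.val n)| ≤ θ := by
    intro i hi
    have hxy : ‖x i - y i‖ ≤ 2*δ := by
      have := Finset.mem_filter.mp hi
      exact this.2
    have hdt : dist ((x i, x (Fin.last n), L.p i.val n) :
        (Fin d → ℝ) × (Fin d → ℝ) × (Fin d → ℝ))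
        ((y i, y (Fin.last n), L.p i.val n)) < η2 := by
      rw [Prod.dist_eq, Prod.dist_eq]
      simp only [dist_self]
      apply max_lt
      · rw [dist_eq_norm]; linarith
      · apply max_lt
        · rw [dist_eq_norm]; linarith
        · exact hη2
    have := hw _ ⟨hx i, hx _, hPmem _ _⟩ _ ⟨hy i, hy _, hPmem _ _⟩ hdt
    rw [Real.dist_eq] at this
    exact this.le
  have key := weighted_avg_diff (d := d) (m := n+1) (Nat.succ_pos n)
    (fun i => L.w (x i) (x (Fin.last n)) (L.p i.val n))
    (fun i => L.w (y i) (y (Fin.last n)) (L.p i.val n))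
    (fun i => L.val (x i)) (fun i => L.val (y i))
    c C M θ (2*δ) hc hw1c hw1C hw2c hw2C hv1 hv2 G hGv hGw hθ.le hBad
    (by positivity)
  have hattnx : L.attn x (Fin.last n) =
      (∑ i : Fin (n+1), L.w (x i) (x (Fin.last n)) (L.p i.val n))⁻¹ •
      ∑ i : Fin (n+1), L.w (x i) (x (Fin.last n)) (L.p i.val n) • L.val (x i) := by
    simp only [AttentionLayer.attn, hIic, Fin.val_last]
  have hattny : L.attn y (Fin.last n) =
      (∑ i : Fin (n+1), L.w (y i) (y (Fin.last n)) (L.p i.val n))⁻¹ •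
      ∑ i : Fin (n+1), L.w (y i) (y (Fin.last n)) (L.p i.val n) • L.val (y i) := by
    simp only [AttentionLayer.attn, hIic, Fin.val_last]
  rw [hattnx, hattny]
  refine le_trans key ?_
  have hcoef1 : 1 + 2*M/c ≤ R := by
    have : 0 ≤ 16*M*C/c := by positivity
    rw [hRdef]; linarith
  have hcoef2 : 16*M*C/c ≤ R := by
    have h1 : 0 < 2*M/c := by positivity
    rw [hRdef]; linarith
  have h1 : θ*(1 + 2*M/c) ≤ θ*R := mul_le_mul_of_nonneg_left hcoef1 hθ.le
  have h2 : (2*δ)*(8*M*C/c) = δ*(16*M*C/c) := by ring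
  have h3 : δ*(16*M*C/c) ≤ δ*R := mul_le_mul_of_nonneg_left hcoef2 hδpos.le
  have h4 : θ*R = ε/2 := by rw [hθdef]; field_simp
  have h5 : δ*R ≤ ε/2 := by
    have hδle : δ ≤ ε/(2*R) := min_le_right _ _
    calc δ*R ≤ (ε/(2*R))*R := mul_le_mul_of_nonneg_right hδle hR.le
      _ = ε/2 := by field_simp
  linarith
end
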